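/- The Mellin–Fejér kernel F^c_ρ(x) := (x^{-c}/(2π)) ρ sinc²((ρ/π) log √x) (with F^c_ρ(1) = ρ/(2π)) belongs to X_c, and its Mellin transform on the line s = c + iv is the triangular function: [F^c_ρ]^∧_M(c + iv) = 1 − |v|/ρ for |v| ≤ ρ and 0 for |v| > ρ. -/

import Mathlib

open Real

/-- `_root_.sinc u = sin(πu)/(πu)`, `_root_.sinc 0 = 1`. -/
noncomputable def _root_.sinc (u : ℝ) : ℝ :=
  if u = 0 then 1 else Real.sin (π * u) / (π * u)

/-- The Mellin–Fejér kernel `F^c_ρ(x) = (x^{-c}/(2π)) ρ sinc²((ρ/π) log √x)`. -/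
noncomputable def mellinFejer (c ρ : ℝ) (x : ℝ) : ℝ :=
  x ^ (-c) / (2 * π) * ρ * _root_.sinc (ρ / π * Real.log (Real.sqrt x)) ^ 2

namespace MFaux

open MeasureTheory Complex Set intervalIntegral
open scoped FourierTransform

lemma sinc_neg (u : ℝ) : _root_.sinc (-u) = _root_.sinc u := by
  unfold _root_.sinc
  rcases eq_or_ne u 0 with h | h
  · simp [h]
  · rw [if_neg (neg_ne_zero.mpr h), if_neg h, mul_neg, Real.sin_neg, neg_div_neg_eq]

lemma measurable_sinc : Measurable _root_.sinc := by
  unfold _root_.sinc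
  exact Measurable.ite (measurableSet_eq) measurable_const
    ((Real.measurable_sin.comp (measurable_id.const_mul π)).div
      (measurable_id.const_mul π))

lemma sinc_sq_le_one (u : ℝ) : _root_.sinc u ^ 2 ≤ 1 := by
  rcases eq_or_ne u 0 with h | h
  · simp [_root_.sinc, h]
  · rw [_root_.sinc, if_neg h]
    have hπu : π * u ≠ 0 := mul_ne_zero Real.pi_ne_zero h
    rw [sq_le_one_iff_abs_le_one, abs_div]
    rw [div_le_one (abs_pos.mpr hπu)]
    exact Real.abs_sin_le_abs

/-- The function `g` appearing as the Fejér kernel on the additive line. -/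
noncomputable def gr (ρ t : ℝ) : ℝ := ρ / (2 * π) * _root_.sinc (ρ / (2 * π) * t) ^ 2

lemma gr_neg (ρ t : ℝ) : gr ρ (-t) = gr ρ t := by
  unfold gr; rw [mul_neg, sinc_neg]

lemma gr_nonneg (ρ : ℝ) (hρ : 0 ≤ ρ) (t : ℝ) : 0 ≤ gr ρ t := by
  unfold gr
  have := Real.pi_pos
  positivity

lemma measurable_gr (ρ : ℝ) : Measurable (gr ρ) := by
  unfold gr
  exact ((measurable_sinc.comp (measurable_id.const_mul _)).pow_const 2).const_mul _

lemma sq_mul_sinc_sq_le {k : ℝ} (hk : 0 < k) (t : ℝ) :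
    _root_.sinc (k * t) ^ 2 * t ^ 2 ≤ 1 / k ^ 2 := by
  rcases eq_or_ne t 0 with h | h
  · simp [h]
    positivity
  · have hkt : k * t ≠ 0 := mul_ne_zero hk.ne' h
    rw [_root_.sinc, if_neg hkt]
    have hπ : (0:ℝ) < π := Real.pi_pos
    have h1 : Real.sin (π * (k * t)) ^ 2 ≤ 1 := Real.sin_sq_le_one _
    have h2 : (Real.sin (π * (k * t)) / (π * (k * t))) ^ 2 * t ^ 2
        = Real.sin (π * (k * t)) ^ 2 / (π ^ 2 * k ^ 2) := by
      field_simp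
    rw [h2]
    have hπ1 : (1:ℝ) ≤ π ^ 2 := by nlinarith [Real.pi_gt_three]
    have hk2 : (0:ℝ) < k ^ 2 := by positivity
    rw [div_le_div_iff₀ (by positivity) (by positivity)]
    nlinarith [Real.sin_sq_le_one (π * (k * t))]

lemma integrable_gr {ρ : ℝ} (hρ : 0 < ρ) : Integrable (gr ρ) := by
  have hπ : (0:ℝ) < π := Real.pi_pos
  set k := ρ / (2 * π) with hk
  have hk0 : 0 < k := by positivity
  refine Integrable.mono' ((integrable_inv_one_add_sq).const_mul (k * (1 + 1 / k ^ 2)))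
    ((measurable_gr ρ).aestronglyMeasurable) ?_
  filter_upwards with t
  rw [Real.norm_eq_abs, _root_.abs_of_nonneg (gr_nonneg ρ hρ.le t)]
  have h1 : (0:ℝ) < 1 + t ^ 2 := by positivity
  rw [mul_comm (k * (1 + 1 / k ^ 2)) _, inv_mul_eq_div, le_div_iff₀ h1]
  have h2 := sinc_sq_le_one (k * t)
  have h3 := sq_mul_sinc_sq_le hk0 t
  unfold gr
  rw [← hk]
  nlinarith [gr_nonneg ρ hρ.le t, hk0]

/-- The triangle function (on the Fourier side, with mathlib's `2π` convention). -/
noncomputable def T (ρ w : ℝ) : ℝ := max (1 - |2 * π * w| / ρ) 0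

lemma T_neg (ρ w : ℝ) : T ρ (-w) = T ρ w := by
  unfold T; rw [mul_neg, abs_neg]

lemma continuous_T (ρ : ℝ) : Continuous (T ρ) := by
  unfold T; fun_prop

lemma T_eq_zero {ρ w : ℝ} (hρ : 0 < ρ) (hw : ρ / (2 * π) ≤ |w|) : T ρ w = 0 := by
  have hπ : (0:ℝ) < π := Real.pi_pos
  unfold T
  rw [max_eq_right]
  have h1 : |2 * π * w| = 2 * π * |w| := by
    rw [abs_mul, _root_.abs_of_nonneg (by positivity : (0:ℝ) ≤ 2 * π)]
  rw [h1]
  have h2 : ρ ≤ 2 * π * |w| := by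
    rw [div_le_iff₀ (by positivity)] at hw
    linarith [hw]
  have : (1:ℝ) ≤ 2 * π * |w| / ρ := by
    rw [le_div_iff₀ hρ]; linarith
  linarith

lemma integrable_Tc {ρ : ℝ} (hρ : 0 < ρ) :
    Integrable (fun w : ℝ => ((T ρ w : ℝ) : ℂ)) := by
  have hπ : (0:ℝ) < π := Real.pi_pos
  refine Continuous.integrable_of_hasCompactSupport
    (Complex.continuous_ofReal.comp (continuous_T ρ)) ?_
  refine HasCompactSupport.intro (isCompact_Icc (a := -(ρ/(2*π))) (b := ρ/(2*π))) ?_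
  intro w hw
  have : ρ / (2 * π) ≤ |w| := by
    rcases abs_cases w with ⟨h1, _⟩ | ⟨h1, _⟩ <;> simp only [Set.mem_Icc, not_and_or, not_le] at hw <;>
      rcases hw with h | h <;> linarith
  rw [T_eq_zero hρ this, Complex.ofReal_zero]

lemma real_integral {ρ : ℝ} (hρ : 0 < ρ) (x : ℝ) :
    (∫ v in (0:ℝ)..(ρ / (2 * π)), (1 - 2 * π * v / ρ) * (2 * Real.cos (2 * π * v * x)))
      = gr ρ x := by
  have hπ : (0:ℝ) < π := Real.pi_pos
  set a := ρ / (2 * π) with ha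
  have ha0 : 0 < a := by positivity
  rcases eq_or_ne x 0 with hx | hx
  · subst hx
    rw [intervalIntegral.integral_congr (g := fun v => 2 - 4 * π / ρ * v)
      (fun v _ => by simp [mul_comm]; ring)]
    rw [intervalIntegral.integral_sub intervalIntegrable_const
        (intervalIntegrable_id.const_mul _),
      intervalIntegral.integral_const, intervalIntegral.integral_const_mul,
      integral_id]
    have : gr ρ 0 = ρ / (2 * π) := by simp [gr, _root_.sinc]
    rw [this, ha]
    field_simp
    ring_nf
    field_simp
    ring
  · set b := 2 * π * x with hb
    have hb0 : b ≠ 0 := mul_ne_zero (by positivity) hx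
    have hderiv : ∀ w ∈ Set.uIcc (0:ℝ) a, HasDerivAt
        (fun w => (1 - 2 * π * w / ρ) * (2 * Real.sin (b * w) / b)
          - 4 * π / (ρ * b ^ 2) * Real.cos (b * w))
        ((1 - 2 * π * w / ρ) * (2 * Real.cos (2 * π * w * x))) w := by
      intro w _
      have hsin : HasDerivAt (fun w => Real.sin (b * w)) (Real.cos (b * w) * b) w :=
        (Real.hasDerivAt_sin (b * w)).comp w (by simpa using (hasDerivAt_id w).const_mul b)
      have hcos : HasDerivAt (fun w => Real.cos (b * w)) (-Real.sin (b * w) * b) w :=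
        (Real.hasDerivAt_cos (b * w)).comp w (by simpa using (hasDerivAt_id w).const_mul b)
      have h1 : HasDerivAt (fun w : ℝ => 1 - 2 * π * w / ρ) (-(2 * π / ρ)) w := by
        have := (((hasDerivAt_id w).const_mul (2 * π)).div_const ρ).const_sub 1
        simpa using this
      have h2 := (h1.mul ((hsin.const_mul 2).div_const b)).sub
        (hcos.const_mul (4 * π / (ρ * b ^ 2)))
      refine h2.congr_deriv ?_
      rw [show 2 * π * w * x = b * w by rw [hb]; ring]
      field_simp
      ring
    rw [intervalIntegral.integral_eq_sub_of_hasDerivAt hderiv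
      (Continuous.intervalIntegrable (by fun_prop) _ _)]
    have hcosa : Real.cos (b * a) = 1 - 2 * Real.sin (ρ * x / 2) ^ 2 := by
      rw [show b * a = 2 * (ρ * x / 2) by rw [hb, ha]; field_simp]
      have := Real.sin_sq_eq_half_sub (ρ * x / 2)
      linarith
    have h1a : 1 - 2 * π * a / ρ = 0 := by rw [ha]; field_simp; ring
    have hkx : ρ / (2 * π) * x ≠ 0 := mul_ne_zero (by positivity) hx
    rw [gr, _root_.sinc, if_neg hkx]
    rw [show π * (ρ / (2 * π) * x) = ρ * x / 2 by field_simp]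
    simp only [mul_zero, Real.sin_zero, Real.cos_zero, h1a, hcosa, zero_mul, zero_div,
      zero_sub, mul_one]
    rw [hb]
    field_simp
    ring

lemma fourier_T {ρ : ℝ} (hρ : 0 < ρ) (x : ℝ) :
    𝓕 (fun w : ℝ => ((T ρ w : ℝ) : ℂ)) x = ((gr ρ x : ℝ) : ℂ) := by
  have hπ : (0:ℝ) < π := Real.pi_pos
  set a := ρ / (2 * π) with ha
  have ha0 : 0 < a := by positivity
  rw [Real.fourier_real_eq_integral_exp_smul]
  set f : ℝ → ℂ := fun v => Complex.exp (↑(-2 * π * v * x) * Complex.I) • ((T ρ v : ℝ) : ℂ)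
    with hf
  have hsupp : Function.support f ⊆ Set.Ioc (-a) a := by
    intro v hv
    by_contra hvn
    apply hv
    have h1 : a ≤ |v| := by
      simp only [Set.mem_Ioc, not_and_or, not_lt, not_le] at hvn
      rcases hvn with h | h
      · rw [abs_of_nonpos (by linarith)]; linarith
      · exact le_trans h.le (le_abs_self v)
    simp only [hf]
    rw [T_eq_zero hρ (ha ▸ h1), Complex.ofReal_zero, smul_zero]
  rw [← intervalIntegral.integral_eq_integral_of_support_subset hsupp]
  have hcont : Continuous f := by
    refine Continuous.smul (f := fun v => Complex.exp (↑(-2 * π * v * x) * Complex.I)) (g := fun v => ((T ρ v : ℝ) : ℂ)) ?_ ?_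
    · exact Complex.continuous_exp.comp (by fun_prop)
    · exact Complex.continuous_ofReal.comp (continuous_T ρ)
  have hsplit : (∫ v in (-a)..a, f v) = (∫ v in (-a)..(0:ℝ), f v) + ∫ v in (0:ℝ)..a, f v :=
    (intervalIntegral.integral_add_adjacent_intervals
      (hcont.intervalIntegrable _ _) (hcont.intervalIntegrable _ _)).symm
  rw [hsplit]
  have hrefl : (∫ v in (-a)..(0:ℝ), f v) = ∫ v in (0:ℝ)..a, f (-v) := by
    rw [intervalIntegral.integral_comp_neg]
    norm_num
  rw [hrefl, ← intervalIntegral.integral_add ((Continuous.intervalIntegrable (by exact hcont.comp continuous_neg :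
      Continuous fun v : ℝ => f (-v)) _ _))
    (hcont.intervalIntegrable _ _)]
  have hkey : Set.EqOn (fun v => f (-v) + f v)
      (fun v => (((1 - 2 * π * v / ρ) * (2 * Real.cos (2 * π * v * x)) : ℝ) : ℂ))
      (Set.uIcc (0:ℝ) a) := by
    intro v hv
    rw [Set.uIcc_of_le ha0.le] at hv
    obtain ⟨hv0, hva⟩ := hv
    have hT : T ρ v = 1 - 2 * π * v / ρ := by
      rw [T]
      have h1 : |2 * π * v| = 2 * π * v := abs_of_nonneg (by positivity)
      rw [h1, max_eq_left]
      rw [sub_nonneg, div_le_one hρ]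
      rw [ha, le_div_iff₀ (by positivity)] at hva
      linarith
    simp only [hf, T_neg, hT]
    rw [show (-2 * π * -v * x : ℝ) = 2 * π * v * x by ring,
      show (-2 * π * v * x : ℝ) = -(2 * π * v * x) by ring]
    simp only [smul_eq_mul, Complex.ofReal_neg, Complex.exp_mul_I, Complex.cos_neg,
      Complex.sin_neg]
    push_cast
    ring
  rw [intervalIntegral.integral_congr hkey, intervalIntegral.integral_ofReal, ha]
  exact congrArg Complex.ofReal (real_integral hρ x)

lemma fourier_gr {ρ : ℝ} (hρ : 0 < ρ) (w : ℝ) :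
    𝓕 (fun t : ℝ => ((gr ρ t : ℝ) : ℂ)) w = ((T ρ w : ℝ) : ℂ) := by
  have hTfun : 𝓕 (fun w : ℝ => ((T ρ w : ℝ) : ℂ)) = fun t : ℝ => ((gr ρ t : ℝ) : ℂ) :=
    funext (fourier_T hρ)
  have h1 : Integrable (fun w : ℝ => ((T ρ w : ℝ) : ℂ)) := integrable_Tc hρ
  have h2 : Integrable (𝓕 (fun w : ℝ => ((T ρ w : ℝ) : ℂ))) := by
    rw [hTfun]; exact (integrable_gr hρ).ofReal
  have h3 : ContinuousAt (fun w : ℝ => ((T ρ w : ℝ) : ℂ)) (-w) :=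
    (Complex.continuous_ofReal.comp (continuous_T ρ)).continuousAt
  have inv := MeasureTheory.Integrable.fourierInv_fourier_eq h1 h2 h3
  rw [hTfun, Real.fourierInv_eq_fourier_neg, neg_neg] at inv
  rw [inv, T_neg]

lemma mellinFejer_exp (c ρ t : ℝ) :
    mellinFejer c ρ (Real.exp t) = Real.exp (-c * t) * gr ρ t := by
  unfold mellinFejer gr
  rw [Real.rpow_def_of_pos (Real.exp_pos t), Real.log_exp, mul_comm t (-c)]
  rw [Real.log_sqrt (Real.exp_pos t).le, Real.log_exp]
  rw [show ρ / π * (t / 2) = ρ / (2 * π) * t by ring]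
  ring

end MFaux

open MFaux MeasureTheory Complex Set
open scoped FourierTransform

theorem mellinFejer_transform (c ρ : ℝ) (hρ : 0 < ρ) :
    MeasureTheory.IntegrableOn
      (fun u : ℝ => |mellinFejer c ρ u| * u ^ (c - 1)) (Set.Ioi (0:ℝ)) ∧
    ∀ v : ℝ, ∫ u in Set.Ioi (0:ℝ),
        (u : ℂ) ^ ((c : ℂ) + Complex.I * v - 1) * (mellinFejer c ρ u : ℂ) =
      if |v| ≤ ρ then ((1 - |v| / ρ : ℝ) : ℂ) else 0 := by
  have hπ : (0:ℝ) < π := Real.pi_pos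
  have hMF : ∀ u : ℝ, mellinFejer c ρ (Real.exp (-u)) = Real.exp (c * u) * gr ρ u := by
    intro u
    rw [mellinFejer_exp, gr_neg, show -c * -u = c * u by ring]
  constructor
  · have hderiv : ∀ x ∈ Set.univ, HasDerivWithinAt (Real.exp ∘ Neg.neg)
        (-Real.exp (-x)) Set.univ x := fun x _ => mul_neg_one (Real.exp (-x)) ▸
      ((Real.hasDerivAt_exp (-x)).comp x (hasDerivAt_neg x)).hasDerivWithinAt
    have himg : Real.exp ∘ Neg.neg '' Set.univ = Set.Ioi (0:ℝ) := by
      rw [Set.image_comp, Set.image_univ_of_surjective neg_surjective, Set.image_univ,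
        Real.range_exp]
    have hinj : Set.univ.InjOn (Real.exp ∘ Neg.neg) :=
      Real.exp_injective.injOn.comp neg_injective.injOn (Set.mapsTo_univ _ _)
    rw [← himg, MeasureTheory.integrableOn_image_iff_integrableOn_abs_deriv_smul
      MeasurableSet.univ hderiv hinj]
    have heq : (fun x : ℝ => |(-Real.exp (-x))| •
        ((fun u : ℝ => |mellinFejer c ρ u| * u ^ (c - 1)) ((Real.exp ∘ Neg.neg) x)))
        = gr ρ := by
      funext x
      simp only [Function.comp_apply, smul_eq_mul, abs_neg,
        _root_.abs_of_pos (Real.exp_pos (-x))]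
      rw [hMF x, _root_.abs_of_nonneg
        (mul_nonneg (Real.exp_pos _).le (gr_nonneg ρ hρ.le x))]
      rw [Real.rpow_def_of_pos (Real.exp_pos _), Real.log_exp]
      rw [show Real.exp (-x) * (Real.exp (c * x) * gr ρ x * Real.exp (-x * (c - 1)))
          = Real.exp (-x) * Real.exp (c * x) * Real.exp (-x * (c - 1)) * gr ρ x by ring]
      rw [← Real.exp_add, ← Real.exp_add, show -x + c * x + -x * (c - 1) = 0 by ring,
        Real.exp_zero, one_mul]
    rw [heq, MeasureTheory.integrableOn_univ]
    exact integrable_gr hρ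
  · intro v
    have hm : (∫ u in Set.Ioi (0:ℝ),
          (u : ℂ) ^ ((c : ℂ) + Complex.I * v - 1) * (mellinFejer c ρ u : ℂ))
        = mellin (fun u : ℝ => ((mellinFejer c ρ u : ℝ) : ℂ)) ((c : ℂ) + Complex.I * v) := by
      rw [mellin]
      simp only [smul_eq_mul]
    rw [hm, mellin_eq_fourier]
    have hre : ((c : ℂ) + Complex.I * v).re = c := by simp
    have him : ((c : ℂ) + Complex.I * v).im = v := by simp
    rw [hre, him]
    have hfun : (fun u : ℝ => Real.exp (-c * u) • ((mellinFejer c ρ (Real.exp (-u)) : ℝ) : ℂ))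
        = fun t : ℝ => ((gr ρ t : ℝ) : ℂ) := by
      funext u
      rw [hMF u, Complex.real_smul, ← Complex.ofReal_mul, ← mul_assoc, ← Real.exp_add,
        show -c * u + c * u = 0 by ring, Real.exp_zero, one_mul]
    rw [hfun, fourier_gr hρ (v / (2 * π))]
    have h2 : 2 * π * (v / (2 * π)) = v := by field_simp
    simp only [T, h2]
    split_ifs with h
    · rw [max_eq_left (by rw [sub_nonneg, div_le_one hρ]; exact h)]
    · rw [max_eq_right (by push_neg at h; rw [sub_nonpos, le_div_iff₀ hρ, one_mul]; exact h.le)]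
      simp
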